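/- Hard-thresholding spectral error bound under sparsity: let Σ_u = (σ_{ij}) be symmetric with sparsity m_p = max_i Σ_j |σ_{ij}|^q for some q ∈ [0,1), and suppose Σ̂_u^D = (σ̂_{ij}^D) is symmetric and satisfies, for every (i,j): |σ̂_{ij}^D − σ_{ij}| ≤ 2ω when σ̂_{ij}^D ≠ 0 or |σ_{ij}| > ω, and σ̂_{ij}^D = 0 implies |σ̂_{ij}^D − σ_{ij}| = |σ_{ij}| ≤ min(|σ_{ij}|, ω·1{|σ_{ij}| ≤ ω} + |σ_{ij}|). If |σ̂_{ij}^D − σ_{ij}| ≤ 2ω·1{|σ_{ij}| ≥ ω/2} + |σ_{ij}|·1{|σ_{ij}| < ω/2} for all i,j, then ‖Σ̂_u^D − Σ_u‖₂ ≤ ‖Σ̂_u^D − Σ_u‖_∞ ≤ (2^{1+q} + 1) m_p ω^{1−q}. -/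

import Mathlib

open Matrix BigOperators


-- weighted Cauchy-Schwarz per row
lemma row_cs {n : Type*} [Fintype n] (a x : n → ℝ) :
    (∑ j, a j * x j) ^ 2 ≤ (∑ j, |a j|) * (∑ j, |a j| * x j ^ 2) := by
  have h1 : (∑ j, a j * x j) ^ 2 ≤ (∑ j, |a j * x j|) ^ 2 := by
    rw [← sq_abs]
    exact pow_le_pow_left₀ (abs_nonneg _) (Finset.abs_sum_le_sum_abs _ _) 2
  refine h1.trans ?_
  have h2 : ∀ j : n, |a j * x j| = Real.sqrt |a j| * (Real.sqrt |a j| * |x j|) := by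
    intro j
    rw [← mul_assoc, Real.mul_self_sqrt (abs_nonneg _), abs_mul]
  calc (∑ j, |a j * x j|) ^ 2 = (∑ j, Real.sqrt |a j| * (Real.sqrt |a j| * |x j|)) ^ 2 := by
        simp_rw [h2]
    _ ≤ (∑ j, Real.sqrt |a j| ^ 2) * (∑ j, (Real.sqrt |a j| * |x j|) ^ 2) :=
        Finset.sum_mul_sq_le_sq_mul_sq _ _ _
    _ = (∑ j, |a j|) * (∑ j, |a j| * x j ^ 2) := by
        congr 1
        · exact Finset.sum_congr rfl fun j _ => Real.sq_sqrt (abs_nonneg _)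
        · refine Finset.sum_congr rfl fun j _ => ?_
          rw [mul_pow, Real.sq_sqrt (abs_nonneg _), sq_abs]

-- symmetric matrix: op norm ≤ max row sum
lemma opnorm_le_rowsum {p : ℕ} (A : Matrix (Fin p) (Fin p) ℝ) (hA : A.IsSymm) :
    ‖Matrix.toEuclideanCLM (𝕜 := ℝ) A‖ ≤ ⨆ i, ∑ j, |A i j| := by
  set M : ℝ := ⨆ i, ∑ j, |A i j| with hM
  have hrow : ∀ i, ∑ j, |A i j| ≤ M :=
    fun i => le_ciSup (f := fun i => ∑ j, |A i j|) (Set.Finite.bddAbove (Set.finite_range _)) i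
  have hM0 : 0 ≤ M := by
    rcases Nat.eq_zero_or_pos p with hp | hp
    · subst hp; simp [hM, Real.iSup_of_isEmpty]
    · have : Nonempty (Fin p) := ⟨⟨0, hp⟩⟩
      exact le_trans (Finset.sum_nonneg fun j _ => abs_nonneg _) (hrow this.some)
  refine ContinuousLinearMap.opNorm_le_bound _ hM0 fun x => ?_
  have hkey : ∑ i, ((A *ᵥ (x : Fin p → ℝ)) i) ^ 2 ≤ M ^ 2 * ∑ j, (x j) ^ 2 := by
    calc ∑ i, ((A *ᵥ (x : Fin p → ℝ)) i) ^ 2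
        ≤ ∑ i, (∑ j, |A i j|) * (∑ j, |A i j| * (x j) ^ 2) :=
          Finset.sum_le_sum fun i _ => row_cs (fun j => A i j) x
      _ ≤ ∑ i, M * (∑ j, |A i j| * (x j) ^ 2) := by
          refine Finset.sum_le_sum fun i _ => ?_
          exact mul_le_mul_of_nonneg_right (hrow i)
            (Finset.sum_nonneg fun j _ => mul_nonneg (abs_nonneg _) (sq_nonneg _))
      _ = M * ∑ j, (∑ i, |A i j|) * (x j) ^ 2 := by
          rw [← Finset.mul_sum, Finset.sum_comm]
          simp_rw [Finset.sum_mul]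
      _ ≤ M * ∑ j, M * (x j) ^ 2 := by
          refine mul_le_mul_of_nonneg_left (Finset.sum_le_sum fun j _ => ?_) hM0
          refine mul_le_mul_of_nonneg_right ?_ (sq_nonneg _)
          calc ∑ i, |A i j| = ∑ i, |A j i| := by
                refine Finset.sum_congr rfl fun i _ => ?_
                rw [hA.apply j i]
            _ ≤ M := hrow j
      _ = M ^ 2 * ∑ j, (x j) ^ 2 := by rw [← Finset.mul_sum]; ring
  have hx : (toEuclideanCLM (𝕜 := ℝ) A) x = (WithLp.equiv 2 _).symm (A *ᵥ (WithLp.equiv 2 _ x)) := by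
    rfl
  rw [hx, EuclideanSpace.norm_eq, EuclideanSpace.norm_eq]
  simp only [WithLp.equiv_symm_apply, PiLp.toLp_apply, Real.norm_eq_abs, sq_abs]
  rw [← Real.sqrt_sq hM0, ← Real.sqrt_mul (sq_nonneg M)]
  exact Real.sqrt_le_sqrt hkey

lemma ptwise (q ω : ℝ) (hq0 : 0 ≤ q) (hq1 : q < 1) (hω : 0 < ω) (s t : ℝ) (ht0 : 0 ≤ t)
    (ht : t ≤ if ω / 2 ≤ |s| then 2 * ω else |s|) :
    t ≤ ((2 : ℝ) ^ ((1 : ℝ) + q) + 1) * |s| ^ q * ω ^ ((1 : ℝ) - q) := by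
  set a := |s| with ha
  have ha0 : 0 ≤ a := abs_nonneg s
  have hω1q : (0:ℝ) < ω ^ ((1:ℝ) - q) := Real.rpow_pos_of_pos hω _
  have h2q : (0:ℝ) < (2:ℝ) ^ ((1:ℝ) + q) := Real.rpow_pos_of_pos (by norm_num) _
  by_cases hc : ω / 2 ≤ a
  · rw [if_pos hc] at ht
    have haq : ω ^ q ≤ 2 ^ q * a ^ q := by
      rw [← Real.mul_rpow (by norm_num) ha0]
      exact Real.rpow_le_rpow hω.le (by linarith) hq0
    have hωsplit : ω = ω ^ q * ω ^ ((1:ℝ) - q) := by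
      rw [← Real.rpow_add hω]; norm_num
    have h2split : (2:ℝ) ^ ((1:ℝ) + q) = 2 * 2 ^ q := by
      rw [Real.rpow_add (by norm_num : (0:ℝ) < 2), Real.rpow_one]
    have haq0 : 0 ≤ a ^ q := Real.rpow_nonneg ha0 _
    calc t ≤ 2 * ω := ht
      _ = 2 * ω ^ q * ω ^ ((1:ℝ) - q) := by rw [mul_assoc, ← hωsplit]
      _ ≤ 2 * (2 ^ q * a ^ q) * ω ^ ((1:ℝ) - q) := by
          refine mul_le_mul_of_nonneg_right ?_ hω1q.le
          nlinarith [haq]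
      _ = (2 : ℝ) ^ ((1:ℝ) + q) * a ^ q * ω ^ ((1:ℝ) - q) := by rw [h2split]; ring
      _ ≤ ((2 : ℝ) ^ ((1:ℝ) + q) + 1) * a ^ q * ω ^ ((1:ℝ) - q) := by
          nlinarith [mul_nonneg haq0 hω1q.le]
  · rw [if_neg hc] at ht
    push_neg at hc
    rcases eq_or_lt_of_le ha0 with h0 | h0
    · have : t = 0 := le_antisymm (by rw [← h0] at ht; exact ht) ht0
      rw [this]
      positivity
    · have hsplit : a = a ^ q * a ^ ((1:ℝ) - q) := by
        rw [← Real.rpow_add h0]; norm_num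
      have h1q : a ^ ((1:ℝ) - q) ≤ ω ^ ((1:ℝ) - q) :=
        Real.rpow_le_rpow ha0 (by linarith) (by linarith)
      have haq0 : 0 ≤ a ^ q := Real.rpow_nonneg ha0 _
      calc t ≤ a := ht
        _ = a ^ q * a ^ ((1:ℝ) - q) := hsplit
        _ ≤ a ^ q * ω ^ ((1:ℝ) - q) := mul_le_mul_of_nonneg_left h1q haq0
        _ ≤ ((2 : ℝ) ^ ((1:ℝ) + q) + 1) * a ^ q * ω ^ ((1:ℝ) - q) := by
            nlinarith [mul_nonneg haq0 hω1q.le]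
open Matrix BigOperators

noncomputable def frobNorm {m n : Type*} [Fintype m] [Fintype n] (A : Matrix m n ℝ) : ℝ :=
  Real.sqrt (∑ i, ∑ j, (A i j) ^ 2)

noncomputable def maxNorm {m n : Type*} [Fintype m] [Fintype n] (A : Matrix m n ℝ) : ℝ :=
  ⨆ i, ⨆ j, |A i j|

noncomputable def opNorm {n : Type*} [Fintype n] [DecidableEq n] (A : Matrix n n ℝ) : ℝ :=
  ‖Matrix.toEuclideanCLM (𝕜 := ℝ) A‖


/-- Hard-thresholding spectral error bound under sparsity: if `Σ` and `Σ̂ᴰ` are symmetric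
and `|σ̂ᴰ_{ij} − σ_{ij}| ≤ 2ω·1{|σ_{ij}| ≥ ω/2} + |σ_{ij}|·1{|σ_{ij}| < ω/2}` for all
`i, j`, then `‖Σ̂ᴰ − Σ‖₂ ≤ ‖Σ̂ᴰ − Σ‖_∞ ≤ (2^{1+q} + 1) m_p ω^{1−q}`, where
`m_p = max_i ∑_j |σ_{ij}|^q` and `q ∈ [0,1)`, `ω > 0`. -/
theorem stmt19 (p : ℕ) (q ω : ℝ) (hq0 : 0 ≤ q) (hq1 : q < 1) (hω : 0 < ω)
    (Sm D : Matrix (Fin p) (Fin p) ℝ) (hSm : Sm.IsSymm) (hD : D.IsSymm)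
    (h : ∀ i j, |D i j - Sm i j| ≤ if ω / 2 ≤ |Sm i j| then 2 * ω else |Sm i j|) :
    opNorm (D - Sm) ≤ (⨆ i, ∑ j, |D i j - Sm i j|) ∧
      (⨆ i, ∑ j, |D i j - Sm i j|) ≤
        ((2 : ℝ) ^ ((1 : ℝ) + q) + 1) * (⨆ i, ∑ j, |Sm i j| ^ q) * ω ^ ((1 : ℝ) - q) := by
  constructor
  · exact opnorm_le_rowsum (D - Sm) (hD.sub hSm)
  · rcases Nat.eq_zero_or_pos p with hp | hp
    · subst hp
      simp [Real.iSup_of_isEmpty]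
    · have : Nonempty (Fin p) := ⟨⟨0, hp⟩⟩
      have hC0 : (0:ℝ) ≤ (2 : ℝ) ^ ((1:ℝ) + q) + 1 := by positivity
      have hω1q : (0:ℝ) ≤ ω ^ ((1:ℝ) - q) := (Real.rpow_pos_of_pos hω _).le
      refine ciSup_le fun i => ?_
      calc ∑ j, |D i j - Sm i j|
          ≤ ∑ j, ((2 : ℝ) ^ ((1:ℝ) + q) + 1) * |Sm i j| ^ q * ω ^ ((1:ℝ) - q) :=
            Finset.sum_le_sum fun j _ =>
              ptwise q ω hq0 hq1 hω (Sm i j) _ (abs_nonneg _) (h i j)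
        _ = ((2 : ℝ) ^ ((1:ℝ) + q) + 1) * (∑ j, |Sm i j| ^ q) * ω ^ ((1:ℝ) - q) := by
            rw [← Finset.sum_mul, ← Finset.mul_sum]
        _ ≤ ((2 : ℝ) ^ ((1:ℝ) + q) + 1) * (⨆ i, ∑ j, |Sm i j| ^ q) * ω ^ ((1:ℝ) - q) := by
            refine mul_le_mul_of_nonneg_right (mul_le_mul_of_nonneg_left ?_ hC0) hω1q
            exact le_ciSup (f := fun i => ∑ j, |Sm i j| ^ q)
              (Set.Finite.bddAbove (Set.finite_range _)) i
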